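/- The inequality (1−p)·x/(sin x) + p·x/(tan x) > 1 holds for all x in (0, π/2) if and only if p ≤ 1/3. -/

import Mathlib

open Real

-- sin x ≥ x - x^3/6 for x ≥ 0
lemma sin_ge_sub_cube' {x : ℝ} (hx : 0 ≤ x) : x - x^3/6 ≤ Real.sin x := by
  have hder : ∀ y : ℝ, HasDerivAt (fun y => Real.sin y - y + y^3/6)
      (Real.cos y - 1 + y^2/2) y := by
    intro y
    have h := ((Real.hasDerivAt_sin y).sub (hasDerivAt_id y)).add
      ((hasDerivAt_pow 3 y).div_const 6)
    exact h.congr_deriv (by simp; ring)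
  have mono : MonotoneOn (fun y => Real.sin y - y + y^3/6) (Set.Ici (0:ℝ)) := by
    apply monotoneOn_of_deriv_nonneg (convex_Ici 0)
    · fun_prop
    · intro y hy
      exact (hder y).differentiableAt.differentiableWithinAt
    · intro y hy
      rw [(hder y).deriv]
      have := Real.one_sub_sq_div_two_le_cos (x := y)
      linarith
  have h0 : (0:ℝ) ∈ Set.Ici (0:ℝ) := Set.self_mem_Ici
  have := mono h0 (Set.mem_Ici.mpr hx) hx
  simp at this
  linarith

-- key: 3 sin x < x (2 + cos x) on (0, π/2)
lemma key_huy {x : ℝ} (hx : 0 < x) (hx2 : x < π/2) :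
    3 * Real.sin x < x * (2 + Real.cos x) := by
  have hg : ∀ y : ℝ, HasDerivAt (fun y => 2 - 2*Real.cos y - y*Real.sin y)
      (Real.sin y - y * Real.cos y) y := by
    intro y
    have h := (((hasDerivAt_const y (2:ℝ)).sub ((Real.hasDerivAt_cos y).const_mul 2)).sub
      ((hasDerivAt_id y).mul (Real.hasDerivAt_sin y)))
    exact h.congr_deriv (by simp; ring)
  have gpos : ∀ y ∈ Set.Ioo 0 (π/2), 0 < 2 - 2*Real.cos y - y*Real.sin y := by
    intro y hy
    have smono : StrictMonoOn (fun y => 2 - 2*Real.cos y - y*Real.sin y)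
        (Set.Icc 0 (π/2)) := by
      apply strictMonoOn_of_deriv_pos (convex_Icc 0 (π/2))
      · fun_prop
      · intro z hz
        rw [interior_Icc] at hz
        rw [(hg z).deriv]
        have hcz : 0 < Real.cos z := Real.cos_pos_of_mem_Ioo ⟨by linarith [hz.1], hz.2⟩
        have htan := Real.lt_tan hz.1 hz.2
        rw [Real.tan_eq_sin_div_cos] at htan
        have := (lt_div_iff₀ hcz).mp htan
        linarith
    have h0 : (0:ℝ) ∈ Set.Icc 0 (π/2) := ⟨le_refl 0, by positivity⟩
    have hy' : y ∈ Set.Icc 0 (π/2) := ⟨hy.1.le, hy.2.le⟩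
    have := smono h0 hy' hy.1
    simp at this
    linarith
  have hf : ∀ y : ℝ, HasDerivAt (fun y => y*(2+Real.cos y) - 3*Real.sin y)
      (2 - 2*Real.cos y - y*Real.sin y) y := by
    intro y
    have h := ((hasDerivAt_id y).mul ((hasDerivAt_const y (2:ℝ)).add (Real.hasDerivAt_cos y))).sub
      ((Real.hasDerivAt_sin y).const_mul 3)
    exact h.congr_deriv (by simp; ring)
  have smonof : StrictMonoOn (fun y => y*(2+Real.cos y) - 3*Real.sin y)
      (Set.Icc 0 (π/2)) := by
    apply strictMonoOn_of_deriv_pos (convex_Icc 0 (π/2))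
    · fun_prop
    · intro z hz
      rw [interior_Icc] at hz
      rw [(hf z).deriv]
      exact gpos z hz
  have h0 : (0:ℝ) ∈ Set.Icc 0 (π/2) := ⟨le_refl 0, by positivity⟩
  have hx' : x ∈ Set.Icc 0 (π/2) := ⟨hx.le, hx2.le⟩
  have := smonof h0 hx' hx
  simp at this
  linarith

set_option maxHeartbeats 1000000 in
theorem huygens_type_p_circular_reciprocal (p : ℝ) :
    (∀ x : ℝ, 0 < x → x < π / 2 →
      (1 - p) * x / Real.sin x + p * x / Real.tan x > 1) ↔ p ≤ 1 / 3 := by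
  constructor
  · intro h
    by_contra hp
    push_neg at hp
    -- choose small x
    set c : ℝ := (3*p - 1)/(3*p) with hc
    have hp0 : 0 < p := by linarith
    have hc0 : 0 < c := by
      apply div_pos (by linarith) (by linarith)
    obtain ⟨x, hx0, hx1, hxc⟩ : ∃ x : ℝ, 0 < x ∧ x ≤ 1 ∧ x^2 ≤ c := by
      refine ⟨min 1 (Real.sqrt c), lt_min one_pos (Real.sqrt_pos.mpr hc0),
        min_le_left _ _, ?_⟩
      have h1 : min 1 (Real.sqrt c) ≤ Real.sqrt c := min_le_right _ _
      have h2 : 0 ≤ min 1 (Real.sqrt c) :=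
        le_min zero_le_one (Real.sqrt_nonneg c)
      calc (min 1 (Real.sqrt c))^2 ≤ (Real.sqrt c)^2 := by nlinarith
        _ = c := Real.sq_sqrt hc0.le
    have hx2 : x < π/2 := lt_of_le_of_lt hx1 (by linarith [Real.pi_gt_three])
    have hS : 0 < Real.sin x := Real.sin_pos_of_pos_of_lt_pi hx0 (by linarith [Real.pi_gt_three])
    have hC : 0 < Real.cos x := Real.cos_pos_of_mem_Ioo ⟨by linarith, hx2⟩
    have hkey := h x hx0 hx2
    -- rewrite LHS
    have heq : (1 - p) * x / Real.sin x + p * x / Real.tan x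
        = (x - p*x*(1 - Real.cos x)) / Real.sin x := by
      rw [Real.tan_eq_sin_div_cos]
      field_simp
      ring
    rw [heq, gt_iff_lt, lt_div_iff₀ hS, one_mul] at hkey
    -- contradiction: x - p x (1-cos x) ≤ sin x
    have hsl : x - x^3/6 ≤ Real.sin x := sin_ge_sub_cube' hx0.le
    -- 1 - cos x ≥ x²/2 (1 - x²/12)
    have hcosx : Real.cos x = 1 - 2 * Real.sin (x/2)^2 := by
      have h1 := Real.cos_two_mul (x/2)
      have h2 := Real.sin_sq_add_cos_sq (x/2)
      have h3 : (2:ℝ) * (x/2) = x := by ring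
      rw [h3] at h1
      linarith
    have ht0 : 0 < x/2 := by linarith
    have hts : x/2 - (x/2)^3/6 ≤ Real.sin (x/2) := sin_ge_sub_cube' ht0.le
    have htn : 0 ≤ x/2 - (x/2)^3/6 := by nlinarith
    have hsq : (x/2 - (x/2)^3/6)^2 ≤ Real.sin (x/2)^2 := by nlinarith
    have hcb : 1 - Real.cos x ≥ x^2/2 * (1 - x^2/12) := by
      rw [hcosx]
      have e1 : (x/2 - (x/2)^3/6)^2 = x^2/4 - x^4/48 + x^6/2304 := by ring
      have e2 : x^2/2 * (1 - x^2/12) = x^2/2 - x^4/24 := by ring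
      have e3 : (0:ℝ) ≤ x^6 := by positivity
      linarith [hsq]
    -- p (1 - x²/12) ≥ 1/3
    have hpx : p * x^2 ≤ p - 1/3 := by
      have hcm : c * (3*p) = 3*p - 1 :=
        div_mul_cancel₀ _ (by linarith : (3:ℝ)*p ≠ 0)
      nlinarith [mul_le_mul_of_nonneg_right hxc (by linarith : (0:ℝ) ≤ 3*p)]
    have hp13 : p * (1 - x^2/12) ≥ 1/3 := by
      have e0 : 0 ≤ p * x^2 := mul_nonneg hp0.le (sq_nonneg x)
      have e1 : p * (1 - x^2/12) = p - (p*x^2)/12 := by ring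
      linarith
    -- conclude x - p x (1-cos x) ≤ sin x
    have hfinal : x - p*x*(1 - Real.cos x) ≤ Real.sin x := by
      have h1 : p*x*(1 - Real.cos x) ≥ p*x*(x^2/2*(1-x^2/12)) := by
        apply mul_le_mul_of_nonneg_left hcb (by positivity)
      have h2 : p*x*(x^2/2*(1-x^2/12)) = x^3/2 * (p*(1-x^2/12)) := by ring
      have h3 : x^3/2 * (p*(1-x^2/12)) ≥ x^3/2 * (1/3) := by
        apply mul_le_mul_of_nonneg_left hp13 (by positivity)
      linarith
    linarith
  · intro hp x hx hx2
    have hS : 0 < Real.sin x := Real.sin_pos_of_pos_of_lt_pi hx (by linarith [Real.pi_gt_three])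
    have hC : 0 < Real.cos x := Real.cos_pos_of_mem_Ioo ⟨by linarith, hx2⟩
    have heq : (1 - p) * x / Real.sin x + p * x / Real.tan x
        = (x - p*x*(1 - Real.cos x)) / Real.sin x := by
      rw [Real.tan_eq_sin_div_cos]
      field_simp
      ring
    rw [heq, gt_iff_lt, lt_div_iff₀ hS, one_mul]
    have hkey := key_huy hx hx2
    have h1 : 0 ≤ x*(1 - Real.cos x) :=
      mul_nonneg hx.le (by linarith [Real.cos_le_one x])
    have h2 : p * (x*(1 - Real.cos x)) ≤ 1/3 * (x*(1 - Real.cos x)) :=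
      mul_le_mul_of_nonneg_right hp h1
    nlinarith
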